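/- Let Ω be a compact topological space, H a real Hilbert space, and Φ : Ω → H continuous. Let (x_n)_{n≥1} ⊆ Ω be a P-greedy sequence: with V_0 := {0} and V_n := span{Φ x_1, …, Φ x_n}, for every n ≥ 0 the point x_{n+1} satisfies dist(Φ x_{n+1}, V_n) = sup_{x ∈ Ω} dist(Φ x, V_n). Suppose there exist c > 0 and α > 0 such that for every n ≥ 1 there is a set Y_n ⊆ Ω of n points with sup_{x ∈ Ω} dist(Φ x, span{Φ y : y ∈ Y_n}) ≤ c n^{−α}. Then the P-greedy points satisfy sup_{x ∈ Ω} dist(Φ x, V_n) ≤ 2^{5α+1} c n^{−α} for all n ≥ 1. (With Φ x = K(·,x) for a kernel of finite smoothness β generating a Sobolev space, α = β/d − 1/2, this is the convergence rate ‖P_{V(X_n)}‖_{L∞(Ω)} ≤ ĉ₁ n^{−β/d + 1/2}, ĉ₁ = c·2^{5β/d − 3/2}, of the P-greedy algorithm.) -/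

import Mathlib

open Submodule Metric Module
open scoped RealInnerProductSpace

section Aux

variable {F : Type*} [NormedAddCommGroup F] [InnerProductSpace ℝ F]

private lemma sq_le_imp {a b : ℝ} (ha : 0 ≤ a) (hb : 0 ≤ b) (h : a ^ 2 ≤ b ^ 2) : a ≤ b := by
  nlinarith

private lemma le_infDist' {x : F} {s : Set F} (hs : s.Nonempty) {c : ℝ}
    (h : ∀ y ∈ s, c ≤ dist x y) : c ≤ Metric.infDist x s := by
  haveI := hs.to_subtype
  rw [Metric.infDist_eq_iInf]
  exact le_ciInf (fun y => h y y.2)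

private lemma norm_sub_orthProj_le (K : Submodule ℝ F) [HasOrthogonalProjection K] (y : F)
    {w : F} (hw : w ∈ K) : ‖y - (orthogonalProjection K y : F)‖ ≤ ‖y - w‖ := by
  rw [← starProjection_apply, starProjection_minimal]
  exact ciInf_le ⟨0, by rintro b ⟨z, rfl⟩; positivity⟩ (⟨w, hw⟩ : K)

private lemma infDist_orthProj (K : Submodule ℝ F) [HasOrthogonalProjection K] (y : F) :
    Metric.infDist y (K : Set F) = ‖y - (orthogonalProjection K y : F)‖ := by
  apply le_antisymm
  · have := Metric.infDist_le_dist_of_mem (x := y) (coe_mem (orthogonalProjection K y))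
    rwa [dist_eq_norm] at this
  · exact le_infDist' ⟨0, K.zero_mem⟩ (fun w hw => by
      rw [dist_eq_norm]; exact norm_sub_orthProj_le K y hw)

private lemma norm_orthProj_le (K : Submodule ℝ F) [HasOrthogonalProjection K] (y : F) :
    ‖(orthogonalProjection K y : F)‖ ≤ ‖y‖ := by
  have h1 : ‖orthogonalProjection K y‖ ≤ ‖orthogonalProjection K‖ * ‖y‖ :=
    (orthogonalProjection K).le_opNorm y
  have h2 := orthogonalProjection_norm_le K
  have h3 : ‖(orthogonalProjection K y : F)‖ = ‖orthogonalProjection K y‖ := rfl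
  nlinarith [norm_nonneg y]

private lemma bessel {ι : Type*} [Fintype ι] {b : ι → F} (hb : Orthonormal ℝ b) (x : F) :
    (∑ i, (⟪b i, x⟫) ^ 2) ≤ ‖x‖ ^ 2 := by
  have := hb.sum_inner_products_le (s := Finset.univ) x
  simpa [Real.norm_eq_abs, sq_abs] using this

private lemma onb_expansion {ι : Type*} [Fintype ι] {b : ι → F} (hb : Orthonormal ℝ b) {x : F}
    (hx : x ∈ span ℝ (Set.range b)) : x = ∑ i, (⟪b i, x⟫) • b i := by
  obtain ⟨l, rfl⟩ := (mem_span_range_iff_exists_fun ℝ).mp hx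
  refine (Finset.sum_congr rfl fun i _ => ?_).symm
  rw [hb.inner_right_fintype l i]

private lemma det_sq_congr {n : ℕ} {b₁ b₂ : Fin n → F} (h₁ : Orthonormal ℝ b₁)
    (h₂ : Orthonormal ℝ b₂) (hb₂ : ∀ j, b₂ j ∈ span ℝ (Set.range b₁))
    (v : Fin n → F) (hv : ∀ i, v i ∈ span ℝ (Set.range b₂)) :
    (Matrix.of fun r c => (⟪b₁ c, v r⟫)).det ^ 2
      = (Matrix.of fun r c => (⟪b₂ c, v r⟫)).det ^ 2 := by
  classical
  set T : Matrix (Fin n) (Fin n) ℝ := Matrix.of fun c' c => (⟪b₁ c, b₂ c'⟫) with hT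
  have expand : ∀ (bb : Fin n → F), Orthonormal ℝ bb → ∀ (y x : F), x ∈ span ℝ (Set.range bb) →
      (⟪y, x⟫) = ∑ c', (⟪bb c', x⟫) * (⟪y, bb c'⟫) := by
    intro bb hbb y x hx
    conv_lhs => rw [onb_expansion hbb hx]
    rw [inner_sum]
    exact Finset.sum_congr rfl fun c' _ => by rw [real_inner_smul_right]
  have hM : (Matrix.of fun r c => (⟪b₁ c, v r⟫))
      = (Matrix.of fun r c => (⟪b₂ c, v r⟫)) * T := by
    ext r c
    rw [Matrix.mul_apply, Matrix.of_apply, expand b₂ h₂ (b₁ c) (v r) (hv r)]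
    exact Finset.sum_congr rfl fun c' _ => rfl
  have hTT : T * T.transpose = 1 := by
    ext a b
    rw [Matrix.mul_apply]
    have : ∀ c, T a c * T.transpose c b = (⟪b₁ c, b₂ a⟫) * (⟪b₁ c, b₂ b⟫) := fun c => rfl
    calc (∑ c, T a c * T.transpose c b) = ∑ c, (⟪b₁ c, b₂ a⟫) * (⟪b₁ c, b₂ b⟫) :=
          Finset.sum_congr rfl fun c _ => this c
      _ = ∑ c, (⟪b₁ c, b₂ b⟫) * (⟪b₂ a, b₁ c⟫) := by
          exact Finset.sum_congr rfl fun c _ => by rw [real_inner_comm (b₂ a) (b₁ c)]; ring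
      _ = (⟪b₂ a, b₂ b⟫) := by
          rw [← expand b₁ h₁ (b₂ a) (b₂ b) (hb₂ b)]
      _ = (1 : Matrix (Fin n) (Fin n) ℝ) a b := by
          rw [Matrix.one_apply]
          rcases eq_or_ne a b with h | h
          · subst h; simp [real_inner_self_eq_norm_sq, h₂.1 a]
          · simp [h, h₂.2 h]
  have hdetT : T.det ^ 2 = 1 := by
    have := congrArg Matrix.det hTT
    rwa [Matrix.det_mul, Matrix.det_transpose, Matrix.det_one, ← sq] at this
  rw [hM, Matrix.det_mul, mul_pow, hdetT, mul_one]

private lemma gram_schmidt_exists {n : ℕ} (v : Fin n → F)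
    (hv : ∀ i, v i ∉ span ℝ (v '' Set.Iio i)) :
    ∃ e : Fin n → F, Orthonormal ℝ e ∧
      (∀ i, ∀ w ∈ span ℝ (v '' Set.Iio i), (⟪e i, w⟫) = 0) ∧
      (∀ i, v i - (⟪e i, v i⟫) • e i ∈ span ℝ (v '' Set.Iio i)) ∧
      (∀ i, 0 < (⟪e i, v i⟫)) ∧
      (∀ i, e i ∈ span ℝ (v '' Set.Iic i)) ∧
      (∀ i, v i ∈ span ℝ (Set.range e)) := by
  classical
  have key : ∀ i : Fin n, ∃ u : F, ‖u‖ = 1 ∧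
      (∀ w ∈ span ℝ (v '' Set.Iio i), (⟪u, w⟫) = 0) ∧
      (v i - (⟪u, v i⟫) • u ∈ span ℝ (v '' Set.Iio i)) ∧
      (0 < (⟪u, v i⟫)) ∧ (u ∈ span ℝ (v '' Set.Iic i)) := by
    intro i
    haveI : FiniteDimensional ℝ (span ℝ (v '' Set.Iio i)) :=
      FiniteDimensional.span_of_finite ℝ (Set.toFinite _)
    set K := span ℝ (v '' Set.Iio i) with hK
    set p : F := (orthogonalProjection K (v i) : F) with hp
    have hpK : p ∈ K := coe_mem _
    set r : F := v i - p with hrdef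
    have hrK : r ∈ Kᗮ := sub_starProjection_mem_orthogonal (v i)
    have hr0 : r ≠ 0 := by
      intro h
      apply hv i
      have : v i = p := by
        have := sub_eq_zero.mp h; exact this
      rw [this]; exact hpK
    have hnorm : (0:ℝ) < ‖r‖ := norm_pos_iff.mpr hr0
    refine ⟨‖r‖⁻¹ • r, ?_, ?_, ?_, ?_, ?_⟩
    · rw [norm_smul, norm_inv, norm_norm]
      field_simp
    · intro w hw
      rw [real_inner_smul_left]
      have : (⟪w, r⟫) = 0 := (Submodule.mem_orthogonal K r).mp hrK w hw
      rw [real_inner_comm] at this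
      rw [this, mul_zero]
    · have hinner : (⟪‖r‖⁻¹ • r, v i⟫) = ‖r‖ := by
        have : v i = r + p := by rw [hrdef]; abel
        rw [real_inner_smul_left, this, inner_add_right]
        have h1 : (⟪r, p⟫) = 0 := by
          have := (Submodule.mem_orthogonal K r).mp hrK p hpK
          rwa [real_inner_comm] at this
        rw [h1, add_zero, real_inner_self_eq_norm_sq]
        field_simp [pow_two]
      rw [hinner, smul_smul]
      have : ‖r‖ * ‖r‖⁻¹ = 1 := by field_simp
      rw [this, one_smul]
      have : v i - r = p := by rw [hrdef]; abel
      rw [this]; exact hpK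
    · have hinner : (⟪‖r‖⁻¹ • r, v i⟫) = ‖r‖ := by
        have hvi : v i = r + p := by rw [hrdef]; abel
        rw [real_inner_smul_left, hvi, inner_add_right]
        have h1 : (⟪r, p⟫) = 0 := by
          have := (Submodule.mem_orthogonal K r).mp hrK p hpK
          rwa [real_inner_comm] at this
        rw [h1, add_zero, real_inner_self_eq_norm_sq]
        field_simp [pow_two]
      rw [hinner]; exact hnorm
    · have h1 : v i ∈ span ℝ (v '' Set.Iic i) :=
        subset_span ⟨i, Set.mem_Iic.mpr le_rfl, rfl⟩
      have h2 : K ≤ span ℝ (v '' Set.Iic i) :=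
        span_mono (Set.image_mono Set.Iio_subset_Iic_self)
      exact smul_mem _ _ (sub_mem h1 (h2 hpK))
  choose e hnorm horthW hdec hpos hIic using key
  have horth : Orthonormal ℝ e := by
    rw [orthonormal_iff_ite]
    intro i j
    rcases eq_or_ne i j with h | h
    · subst h; simp [real_inner_self_eq_norm_sq, hnorm i]
    · simp only [h, if_false]
      rcases lt_or_gt_of_ne h with hlt | hlt
      · -- i < j : e i ∈ span (v '' Iic i) ⊆ span (v '' Iio j)
        have hsub : span ℝ (v '' Set.Iic i) ≤ span ℝ (v '' Set.Iio j) :=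
          span_mono (Set.image_mono (fun a ha => lt_of_le_of_lt ha hlt))
        have := horthW j (e i) (hsub (hIic i))
        rwa [real_inner_comm] at this
      · have hsub : span ℝ (v '' Set.Iic j) ≤ span ℝ (v '' Set.Iio i) :=
          span_mono (Set.image_mono (fun a ha => lt_of_le_of_lt ha hlt))
        exact horthW i (e j) (hsub (hIic j))
  have hmem : ∀ i : Fin n, v i ∈ span ℝ (Set.range e) := by
    have H : ∀ m : ℕ, ∀ i : Fin n, (i : ℕ) < m → v i ∈ span ℝ (Set.range e) := by
      intro m
      induction m with
      | zero => intro i hi; omega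
      | succ m IH =>
        intro i hi
        by_cases hc : (i : ℕ) < m
        · exact IH i hc
        · have hspanle : span ℝ (v '' Set.Iio i) ≤ span ℝ (Set.range e) := by
            rw [span_le]
            rintro y ⟨j, hj, rfl⟩
            exact IH j (by have : (j:ℕ) < (i:ℕ) := hj; omega)
          have hvi : v i = (v i - (⟪e i, v i⟫) • e i) + (⟪e i, v i⟫) • e i := by abel
          rw [hvi]
          exact add_mem (hspanle (hdec i))
            (smul_mem _ _ (subset_span (Set.mem_range_self i)))
    exact fun i => H n i i.2
  exact ⟨e, horth, horthW, hdec, hpos, hIic, hmem⟩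

private lemma det_coords_sq_le {n : ℕ} {b : Fin n → F} (hb : Orthonormal ℝ b)
    (v : Fin n → F) (hv : ∀ i, v i ∈ span ℝ (Set.range b)) :
    (Matrix.of fun r c => (⟪b c, v r⟫)).det ^ 2 ≤ ∏ i, ‖v i‖ ^ 2 := by
  classical
  by_cases hind : LinearIndependent ℝ v
  · have hv' : ∀ i, v i ∉ span ℝ (v '' Set.Iio i) := fun i =>
      hind.notMem_span_image (by simp)
    obtain ⟨e, he, horth, hdec, hpos, hIic, hmem⟩ := gram_schmidt_exists v hv'
    have hespan : ∀ j, e j ∈ span ℝ (Set.range b) := by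
      intro j
      have h1 : span ℝ (v '' Set.Iic j) ≤ span ℝ (Set.range b) := by
        rw [span_le]
        rintro y ⟨k, _, rfl⟩
        exact hv k
      exact h1 (hIic j)
    have hcongr := det_sq_congr hb he hespan v hmem
    rw [hcongr]
    have htri : (Matrix.of fun r c => (⟪e c, v r⟫)).BlockTriangular OrderDual.toDual := by
      intro r c h
      have hrc : r < c := h
      exact horth c (v r) (subset_span ⟨r, hrc, rfl⟩)
    rw [Matrix.det_of_lowerTriangular _ htri]
    rw [← Finset.prod_pow]
    apply Finset.prod_le_prod (fun i _ => sq_nonneg _) (fun i _ => ?_)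
    have h1 : |(⟪e i, v i⟫)| ≤ ‖v i‖ := by
      have := abs_real_inner_le_norm (e i) (v i)
      rwa [he.1 i, one_mul] at this
    calc (Matrix.of fun r c => (⟪e c, v r⟫)) i i ^ 2 = (⟪e i, v i⟫) ^ 2 := rfl
      _ = |(⟪e i, v i⟫)| ^ 2 := (sq_abs _).symm
      _ ≤ ‖v i‖ ^ 2 := by
        apply pow_le_pow_left₀ (abs_nonneg _) h1
  · obtain ⟨g, hg0, i₀, hgne⟩ := Fintype.not_linearIndependent_iff.mp hind
    have hdet : (Matrix.of fun r c => (⟪b c, v r⟫)).det = 0 := by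
      rw [← Matrix.exists_vecMul_eq_zero_iff]
      refine ⟨g, ?_, ?_⟩
      · intro h
        exact hgne (by rw [h]; rfl)
      · funext c
        have h1 : Matrix.vecMul g (Matrix.of fun r c => (⟪b c, v r⟫)) c
            = ∑ r, g r * (⟪b c, v r⟫) := by
          simp [Matrix.vecMul, dotProduct]
        have h2 : (∑ r, g r * (⟪b c, v r⟫)) = (⟪b c, ∑ r, g r • v r⟫) := by
          rw [inner_sum]
          exact Finset.sum_congr rfl fun r _ => by rw [real_inner_smul_right]
        show Matrix.vecMul g _ c = (0 : Fin n → ℝ) c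
        rw [h1, h2, hg0, inner_zero_right, Pi.zero_apply]
    rw [hdet]
    have : (0:ℝ) ≤ ∏ i, ‖v i‖ ^ 2 := Finset.prod_nonneg (fun i _ => sq_nonneg _)
    simpa using this

private lemma hadamard_sq {n : ℕ} (M : Matrix (Fin n) (Fin n) ℝ) :
    M.det ^ 2 ≤ ∏ c, (∑ r, M r c ^ 2) := by
  classical
  set v : Fin n → EuclideanSpace ℝ (Fin n) := fun c => WithLp.toLp 2 (fun r => M r c) with hvdef
  set b : Fin n → EuclideanSpace ℝ (Fin n) := fun i => EuclideanSpace.single i (1:ℝ) with hbdef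
  have hb : Orthonormal ℝ b := by
    have := (EuclideanSpace.basisFun (Fin n) ℝ).orthonormal
    rw [show b = ⇑(EuclideanSpace.basisFun (Fin n) ℝ) from
      funext fun i => (EuclideanSpace.basisFun_apply (Fin n) ℝ i).symm]
    exact this
  have hvmem : ∀ c, v c ∈ span ℝ (Set.range b) := by
    intro c
    have : span ℝ (Set.range b) = ⊤ := by
      have h1 := (EuclideanSpace.basisFun (Fin n) ℝ).toBasis.span_eq
      rw [(EuclideanSpace.basisFun (Fin n) ℝ).coe_toBasis] at h1
      have h2 : b = ⇑(EuclideanSpace.basisFun (Fin n) ℝ) :=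
        funext fun i => (EuclideanSpace.basisFun_apply (Fin n) ℝ i).symm
      rw [h2, h1]
    rw [this]
    trivial
  have key := det_coords_sq_le hb v hvmem
  have hMt : (Matrix.of fun r c => (⟪b c, v r⟫)) = M.transpose := by
    ext r c
    rw [Matrix.of_apply, hbdef, hvdef]
    rw [EuclideanSpace.inner_single_left]
    simp [Matrix.transpose_apply]
  rw [hMt, Matrix.det_transpose] at key
  refine key.trans_eq ?_
  apply Finset.prod_congr rfl
  intro i _
  rw [EuclideanSpace.norm_eq, Real.sq_sqrt (by positivity)]
  apply Finset.sum_congr rfl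
  intro r _
  simp [hvdef, Real.norm_eq_abs, sq_abs]

private lemma prod_le_avg_pow {n : ℕ} (hn : 1 ≤ n) (a : Fin n → ℝ) (ha : ∀ i, 0 ≤ a i) :
    (∏ i, a i) ≤ ((∑ i, a i) / n) ^ n := by
  have hn0 : (n:ℝ) ≠ 0 := by positivity
  have hw : (∑ _i : Fin n, (1 / n : ℝ)) = 1 := by
    rw [Finset.sum_const, Finset.card_univ, Fintype.card_fin, nsmul_eq_mul]
    field_simp
  have hgm := Real.geom_mean_le_arith_mean_weighted Finset.univ (fun _ => (1/n : ℝ)) a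
    (fun i _ => by positivity) hw (fun i _ => ha i)
  have hsum : (∑ i, (1/n : ℝ) * a i) = (∑ i, a i) / n := by
    rw [← Finset.mul_sum]
    ring
  rw [hsum] at hgm
  have heq : (∏ i, a i) = (∏ i, a i ^ (1/n : ℝ)) ^ n := by
    rw [← Finset.prod_pow]
    apply Finset.prod_congr rfl
    intro i _
    rw [← Real.rpow_natCast (a i ^ (1/n:ℝ)) n, ← Real.rpow_mul (ha i)]
    field_simp
    simp
  rw [heq]
  apply pow_le_pow_left₀ (Finset.prod_nonneg fun i _ => Real.rpow_nonneg (ha i) _) hgm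

private lemma sc_ineq {t t' m : ℕ} (hm : 1 ≤ m) (ht : 1 ≤ t) (htm : t ≤ m) (htt : t + t' = 2*m)
    {M ε : ℝ} (hε : 0 ≤ ε) (hεM : ε ≤ M) :
    ((2*m : ℝ) * M^2 / t)^t * ((2*m : ℝ) * ε^2 / t')^t' ≤ 4^m * M^(2*m) * ε^(2*m) := by
  have ht' : 1 ≤ t' := by omega
  have hM0 : 0 ≤ M := hε.trans hεM
  have htR : (0:ℝ) < t := by exact_mod_cast ht
  have ht'R : (0:ℝ) < t' := by exact_mod_cast ht'
  have hmR : (0:ℝ) < m := by exact_mod_cast hm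
  have httR : (t:ℝ) + t' = 2*m := by exact_mod_cast htt
  -- rearrange LHS
  have e1 : ((2*m : ℝ) * M^2 / t)^t = ((2*m:ℝ)/t)^t * M^(2*t) := by
    rw [pow_mul, ← mul_pow]
    congr 1
    ring
  have e2 : ((2*m : ℝ) * ε^2 / t')^t' = ((2*m:ℝ)/t')^t' * ε^(2*t') := by
    rw [pow_mul, ← mul_pow]
    congr 1
    ring
  rw [e1, e2]
  -- part 1 : ((2m/t))^t * ((2m/t'))^t' ≤ 4^m
  have hx : (0:ℝ) < (2*m:ℝ)/t := by positivity
  have hy : (0:ℝ) < (2*m:ℝ)/t' := by positivity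
  have part1 : ((2*m:ℝ)/t)^t * ((2*m:ℝ)/t')^t' ≤ 4^m := by
    have hgm := Real.geom_mean_le_arith_mean_weighted Finset.univ
      (![(t:ℝ)/(2*m), (t':ℝ)/(2*m)])
      (![(2*m:ℝ)/t, (2*m:ℝ)/t'])
      (fun i _ => by fin_cases i <;> (simp; positivity))
      (by
        rw [Fin.sum_univ_two]
        simp only [Matrix.cons_val_zero, Matrix.cons_val_one, Matrix.head_cons]
        rw [← add_div, httR, div_self (by positivity)])
      (fun i _ => by fin_cases i <;> (simp; positivity))
    rw [Fin.prod_univ_two, Fin.sum_univ_two] at hgm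
    simp only [Matrix.cons_val_zero, Matrix.cons_val_one, Matrix.head_cons] at hgm
    have harith : (t:ℝ)/(2*m) * ((2*m:ℝ)/t) + (t':ℝ)/(2*m) * ((2*m:ℝ)/t') = 2 := by
      field_simp
      norm_num
    rw [harith] at hgm
    -- raise to the (2m)-th power
    have hbase0 : (0:ℝ) ≤ ((2*m:ℝ)/t) ^ ((t:ℝ)/(2*m)) * ((2*m:ℝ)/t') ^ ((t':ℝ)/(2*m)) := by
      positivity
    have hpow := pow_le_pow_left₀ hbase0 hgm (2*m)
    have hLHS : (((2*m:ℝ)/t) ^ ((t:ℝ)/(2*m)) * ((2*m:ℝ)/t') ^ ((t':ℝ)/(2*m))) ^ (2*m)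
        = ((2*m:ℝ)/t)^t * ((2*m:ℝ)/t')^t' := by
      rw [mul_pow]
      congr 1
      · rw [← Real.rpow_natCast (((2*m:ℝ)/t) ^ ((t:ℝ)/(2*m))) (2*m),
          ← Real.rpow_mul hx.le]
        have : (t:ℝ)/(2*m) * ((2*m : ℕ):ℝ) = (t:ℝ) := by
          push_cast
          field_simp
        rw [this, Real.rpow_natCast]
      · rw [← Real.rpow_natCast (((2*m:ℝ)/t') ^ ((t':ℝ)/(2*m))) (2*m),
          ← Real.rpow_mul hy.le]
        have : (t':ℝ)/(2*m) * ((2*m : ℕ):ℝ) = (t':ℝ) := by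
          push_cast
          field_simp
        rw [this, Real.rpow_natCast]
    rw [hLHS] at hpow
    refine hpow.trans_eq ?_
    rw [pow_mul]
    norm_num
  -- part 2 : M^(2t) * ε^(2t') ≤ M^(2m) * ε^(2m)
  have part2 : M^(2*t) * ε^(2*t') ≤ M^(2*m) * ε^(2*m) := by
    have hsplit : 2*t' = 2*(m-t) + 2*m := by omega
    have hsplit2 : 2*t + 2*(m-t) = 2*m := by omega
    rw [hsplit, pow_add, ← mul_assoc]
    have h1 : M^(2*t) * ε^(2*(m-t)) ≤ M^(2*t) * M^(2*(m-t)) :=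
      mul_le_mul_of_nonneg_left (pow_le_pow_left₀ hε hεM _) (by positivity)
    have h2 : M^(2*t) * M^(2*(m-t)) = M^(2*m) := by
      rw [← pow_add, hsplit2]
    calc M^(2*t) * ε^(2*(m-t)) * ε^(2*m) ≤ M^(2*t) * M^(2*(m-t)) * ε^(2*m) :=
          mul_le_mul_of_nonneg_right h1 (by positivity)
      _ = M^(2*m) * ε^(2*m) := by rw [h2]
  calc ((2*m:ℝ)/t)^t * M^(2*t) * (((2*m:ℝ)/t')^t' * ε^(2*t'))
      = (((2*m:ℝ)/t)^t * ((2*m:ℝ)/t')^t') * (M^(2*t) * ε^(2*t')) := by ring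
    _ ≤ 4^m * (M^(2*m) * ε^(2*m)) := by
        apply mul_le_mul part1 part2 (by positivity) (by positivity)
    _ = 4^m * M^(2*m) * ε^(2*m) := by ring

private lemma core_bound {m : ℕ} (hm : 1 ≤ m) (g : Fin (2*m) → F) (U : Submodule ℝ F)
    (hU : U ≤ span ℝ (Set.range g)) (hrkU : finrank ℝ U ≤ m)
    {M ε : ℝ} (hε : 0 ≤ ε) (hεM : ε ≤ M)
    (hgM : ∀ i, ‖g i‖ ≤ M) (hgU : ∀ i, Metric.infDist (g i) (U : Set F) ≤ ε) :
    (∏ i, Metric.infDist (g i) ((span ℝ (g '' Set.Iio i) : Submodule ℝ F) : Set F))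
      ≤ 2^m * M^m * ε^m := by
  classical
  have hM0 : 0 ≤ M := hε.trans hεM
  by_cases hdeg : ∃ i, g i ∈ span ℝ (g '' Set.Iio i)
  · obtain ⟨i, hi⟩ := hdeg
    rw [Finset.prod_eq_zero (Finset.mem_univ i) (Metric.infDist_zero_of_mem hi)]
    positivity
  · push_neg at hdeg
    obtain ⟨e, he, horth, hdec, hpos, hIic, hmemv⟩ := gram_schmidt_exists g hdeg
    set E := span ℝ (Set.range e) with hE
    haveI : FiniteDimensional ℝ E := FiniteDimensional.span_of_finite ℝ (Set.finite_range e)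
    have hspan_ge : span ℝ (Set.range g) ≤ E := by
      rw [span_le]; rintro y ⟨i, rfl⟩; exact hmemv i
    have hUE : U ≤ E := hU.trans hspan_ge
    have hErank : finrank ℝ E = 2*m := by
      rw [hE, finrank_span_eq_card he.linearIndependent, Fintype.card_fin]
    haveI : FiniteDimensional ℝ U := Submodule.finiteDimensional_of_le hUE
    set Uc : Submodule ℝ F := Uᗮ ⊓ E with hUcdef
    haveI : FiniteDimensional ℝ Uc := Submodule.finiteDimensional_of_le inf_le_right
    have hsup : U ⊔ Uc = E := by
      apply le_antisymm (sup_le hUE inf_le_right)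
      intro z hz
      have hPU : (orthogonalProjection U z : F) ∈ U := coe_mem _
      refine mem_sup.mpr ⟨(orthogonalProjection U z : F), hPU,
        z - (orthogonalProjection U z : F),
        ⟨sub_starProjection_mem_orthogonal z, sub_mem hz (hUE hPU)⟩, by abel⟩
    have hinf : U ⊓ Uc = ⊥ := by
      rw [eq_bot_iff]
      rintro z hz
      have h1 : z ∈ U := hz.1
      have h2 : z ∈ Uᗮ := hz.2.1
      have : (⟪z, z⟫) = 0 := (Submodule.mem_orthogonal U z).mp h2 z h1
      have : z = 0 := by
        rwa [real_inner_self_eq_norm_sq, pow_eq_zero_iff (by norm_num), norm_eq_zero] at this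
      simp [this]
    set t := finrank ℝ U with htdef
    set t' := finrank ℝ Uc with ht'def
    have hrk2 : t + t' = 2*m := by
      have h := Submodule.finrank_sup_add_finrank_inf_eq U Uc
      rw [hsup, hinf] at h
      rw [hErank, finrank_bot] at h
      omega
    -- orthonormal systems of U and Uc
    let B1 : Fin t → F := fun s => ((stdOrthonormalBasis ℝ U) s : F)
    let B2 : Fin t' → F := fun s => ((stdOrthonormalBasis ℝ Uc) s : F)
    have hB1mem : ∀ s, B1 s ∈ U := fun s => coe_mem _
    have hB2mem : ∀ s, B2 s ∈ Uc := fun s => coe_mem _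
    have hB1 : Orthonormal ℝ B1 := by
      constructor
      · intro s; exact (stdOrthonormalBasis ℝ U).orthonormal.1 s
      · intro s s' hss
        exact (stdOrthonormalBasis ℝ U).orthonormal.2 hss
    have hB2 : Orthonormal ℝ B2 := by
      constructor
      · intro s; exact (stdOrthonormalBasis ℝ Uc).orthonormal.1 s
      · intro s s' hss
        exact (stdOrthonormalBasis ℝ Uc).orthonormal.2 hss
    have hspanB1 : span ℝ (Set.range B1) = U := by
      have h1 : Set.range B1 = (U.subtype '' Set.range ⇑(stdOrthonormalBasis ℝ U)) := by
        rw [← Set.range_comp]; rfl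
      rw [h1, Submodule.span_image]
      have h2 : span ℝ (Set.range ⇑(stdOrthonormalBasis ℝ U)) = ⊤ := by
        rw [← (stdOrthonormalBasis ℝ U).coe_toBasis]
        exact (stdOrthonormalBasis ℝ U).toBasis.span_eq
      rw [h2, Submodule.map_subtype_top]
    have hspanB2 : span ℝ (Set.range B2) = Uc := by
      have h1 : Set.range B2 = (Uc.subtype '' Set.range ⇑(stdOrthonormalBasis ℝ Uc)) := by
        rw [← Set.range_comp]; rfl
      rw [h1, Submodule.span_image]
      have h2 : span ℝ (Set.range ⇑(stdOrthonormalBasis ℝ Uc)) = ⊤ := by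
        rw [← (stdOrthonormalBasis ℝ Uc).coe_toBasis]
        exact (stdOrthonormalBasis ℝ Uc).toBasis.span_eq
      rw [h2, Submodule.map_subtype_top]
    let cb : (Fin t ⊕ Fin t') → F := Sum.elim B1 B2
    have hcb : Orthonormal ℝ cb := by
      constructor
      · rintro (s | s)
        · exact hB1.1 s
        · exact hB2.1 s
      · rintro (s | s) (s' | s') hss
        · exact hB1.2 (by simpa using hss)
        · have h2 : B2 s' ∈ Uᗮ := (hB2mem s').1
          exact (Submodule.mem_orthogonal U (B2 s')).mp h2 (B1 s) (hB1mem s)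
        · have h2 : B2 s ∈ Uᗮ := (hB2mem s).1
          have h3 := (Submodule.mem_orthogonal U (B2 s)).mp h2 (B1 s') (hB1mem s')
          rwa [real_inner_comm] at h3
        · exact hB2.2 (by simpa using hss)
    let ee : (Fin t ⊕ Fin t') ≃ Fin (2*m) := finSumFinEquiv.trans (finCongr hrk2)
    let β : Fin (2*m) → F := cb ∘ ee.symm
    have hβ : Orthonormal ℝ β := hcb.comp _ ee.symm.injective
    have hβspan : span ℝ (Set.range β) = E := by
      have h1 : Set.range β = Set.range cb := ee.symm.surjective.range_comp cb
      rw [h1]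
      show span ℝ (Set.range (Sum.elim B1 B2)) = E
      rw [Set.Sum.elim_range, Submodule.span_union, hspanB1, hspanB2, hsup]
    set Me : Matrix (Fin (2*m)) (Fin (2*m)) ℝ := Matrix.of fun r c => (⟪e c, g r⟫) with hMedef
    set Mβ : Matrix (Fin (2*m)) (Fin (2*m)) ℝ := Matrix.of fun r c => (⟪β c, g r⟫) with hMβdef
    have hβE : ∀ j, β j ∈ span ℝ (Set.range e) := fun j => by
      have h1 : β j ∈ span ℝ (Set.range β) := subset_span (Set.mem_range_self j)
      rwa [hβspan] at h1
    have hgβ : ∀ i, g i ∈ span ℝ (Set.range β) := fun i => by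
      rw [hβspan]; exact hmemv i
    have hcongr : Me.det ^ 2 = Mβ.det ^ 2 := det_sq_congr he hβ hβE g hgβ
    have htri : Me.BlockTriangular OrderDual.toDual := by
      intro r c hrc
      exact horth c (g r) (subset_span ⟨r, hrc, rfl⟩)
    have hdet_e : Me.det = ∏ i, (⟪e i, g i⟫) := Matrix.det_of_lowerTriangular Me htri
    have hlow : (∏ i, Metric.infDist (g i) ((span ℝ (g '' Set.Iio i) : Submodule ℝ F) : Set F))
        ≤ ∏ i, (⟪e i, g i⟫) := by
      apply Finset.prod_le_prod (fun i _ => Metric.infDist_nonneg) (fun i _ => ?_)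
      have hmem2 : g i - (⟪e i, g i⟫) • e i ∈ span ℝ (g '' Set.Iio i) := hdec i
      have h1 := Metric.infDist_le_dist_of_mem (x := g i) hmem2
      have h2 : dist (g i) (g i - (⟪e i, g i⟫) • e i) = ‖(⟪e i, g i⟫) • e i‖ := by
        rw [dist_eq_norm]; congr 1; abel
      rw [h2, norm_smul, he.1 i, mul_one, Real.norm_eq_abs, abs_of_pos (hpos i)] at h1
      exact h1
    have hHad : Mβ.det ^ 2 ≤ ∏ c, (∑ r, (Mβ r c)^2) := hadamard_sq Mβ
    have hsplit2 : (∏ c, (∑ r, (Mβ r c)^2))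
        = (∏ s : Fin t, ∑ r, (Mβ r (ee (Sum.inl s)))^2)
          * ∏ s : Fin t', ∑ r, (Mβ r (ee (Sum.inr s)))^2 := by
      rw [← Equiv.prod_comp ee (fun c => ∑ r, (Mβ r c)^2), Fintype.prod_sum_type]
    have hβinl : ∀ s : Fin t, β (ee (Sum.inl s)) = B1 s := fun s => by
      show cb (ee.symm (ee (Sum.inl s))) = B1 s
      rw [Equiv.symm_apply_apply]
      rfl
    have hβinr : ∀ s : Fin t', β (ee (Sum.inr s)) = B2 s := fun s => by
      show cb (ee.symm (ee (Sum.inr s))) = B2 s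
      rw [Equiv.symm_apply_apply]
      rfl
    have hcard : ((Finset.univ : Finset (Fin (2*m))).card : ℝ) = 2*m := by
      rw [Finset.card_univ, Fintype.card_fin]; push_cast; ring
    have hS1 : (∑ s : Fin t, ∑ r, (Mβ r (ee (Sum.inl s)))^2) ≤ (2*m:ℝ) * M^2 := by
      have hper : ∀ r, (∑ s : Fin t, (⟪B1 s, g r⟫)^2) ≤ M^2 := fun r =>
        le_trans (bessel hB1 (g r)) (pow_le_pow_left₀ (norm_nonneg _) (hgM r) 2)
      calc (∑ s : Fin t, ∑ r, (Mβ r (ee (Sum.inl s)))^2)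
          = ∑ s : Fin t, ∑ r, (⟪B1 s, g r⟫)^2 := by
            apply Finset.sum_congr rfl; intro s _
            apply Finset.sum_congr rfl; intro r _
            rw [hMβdef, Matrix.of_apply, hβinl s]
        _ = ∑ r, ∑ s : Fin t, (⟪B1 s, g r⟫)^2 := Finset.sum_comm
        _ ≤ ∑ _r : Fin (2*m), M^2 := Finset.sum_le_sum (fun r _ => hper r)
        _ = (2*m:ℝ) * M^2 := by
            rw [Finset.sum_const, nsmul_eq_mul, hcard]
    have hS2 : (∑ s : Fin t', ∑ r, (Mβ r (ee (Sum.inr s)))^2) ≤ (2*m:ℝ) * ε^2 := by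
      have hper : ∀ r, (∑ s : Fin t', (⟪B2 s, g r⟫)^2) ≤ ε^2 := by
        intro r
        have key : ∀ u ∈ U, (∑ s : Fin t', (⟪B2 s, g r⟫)^2) ≤ ‖g r - u‖^2 := by
          intro u hu
          have heq : ∀ s, (⟪B2 s, g r⟫) = (⟪B2 s, g r - u⟫) := fun s => by
            rw [inner_sub_right]
            have h2 : B2 s ∈ Uᗮ := (hB2mem s).1
            have h3 := (Submodule.mem_orthogonal U (B2 s)).mp h2 u hu
            rw [real_inner_comm] at h3
            rw [h3, sub_zero]
          calc (∑ s : Fin t', (⟪B2 s, g r⟫)^2) = ∑ s : Fin t', (⟪B2 s, g r - u⟫)^2 :=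
                Finset.sum_congr rfl fun s _ => by rw [heq s]
            _ ≤ ‖g r - u‖^2 := bessel hB2 _
        have ha0 : (0:ℝ) ≤ ∑ s : Fin t', (⟪B2 s, g r⟫)^2 :=
          Finset.sum_nonneg fun s _ => sq_nonneg _
        have h1 : Real.sqrt (∑ s : Fin t', (⟪B2 s, g r⟫)^2)
            ≤ Metric.infDist (g r) (U : Set F) := by
          apply le_infDist' ⟨0, U.zero_mem⟩
          intro u hu
          rw [dist_eq_norm]
          calc Real.sqrt (∑ s : Fin t', (⟪B2 s, g r⟫)^2)
              ≤ Real.sqrt (‖g r - u‖^2) := Real.sqrt_le_sqrt (key u hu)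
            _ = ‖g r - u‖ := Real.sqrt_sq (norm_nonneg _)
        calc (∑ s : Fin t', (⟪B2 s, g r⟫)^2)
            = (Real.sqrt (∑ s : Fin t', (⟪B2 s, g r⟫)^2))^2 := (Real.sq_sqrt ha0).symm
          _ ≤ (Metric.infDist (g r) (U : Set F))^2 :=
              pow_le_pow_left₀ (Real.sqrt_nonneg _) h1 2
          _ ≤ ε^2 := pow_le_pow_left₀ Metric.infDist_nonneg (hgU r) 2
      calc (∑ s : Fin t', ∑ r, (Mβ r (ee (Sum.inr s)))^2)
          = ∑ s : Fin t', ∑ r, (⟪B2 s, g r⟫)^2 := by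
            apply Finset.sum_congr rfl; intro s _
            apply Finset.sum_congr rfl; intro r _
            rw [hMβdef, Matrix.of_apply, hβinr s]
        _ = ∑ r, ∑ s : Fin t', (⟪B2 s, g r⟫)^2 := Finset.sum_comm
        _ ≤ ∑ _r : Fin (2*m), ε^2 := Finset.sum_le_sum (fun r _ => hper r)
        _ = (2*m:ℝ) * ε^2 := by
            rw [Finset.sum_const, nsmul_eq_mul, hcard]
    have hcol0 : ∀ c, (0:ℝ) ≤ ∑ r, (Mβ r c)^2 := fun c =>
      Finset.sum_nonneg fun r _ => sq_nonneg _
    have ht'pos : 1 ≤ t' := by omega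
    have ht'R : (0:ℝ) < t' := by exact_mod_cast ht'pos
    have hright : (∏ s : Fin t', ∑ r, (Mβ r (ee (Sum.inr s)))^2)
        ≤ ((2*m:ℝ) * ε^2 / t')^t' := by
      refine le_trans (prod_le_avg_pow ht'pos _ (fun s => hcol0 _)) ?_
      apply pow_le_pow_left₀ (by positivity) ((div_le_div_iff_of_pos_right ht'R).mpr hS2)
    have hrightnn : (0:ℝ) ≤ ∏ s : Fin t', ∑ r, (Mβ r (ee (Sum.inr s)))^2 :=
      Finset.prod_nonneg fun s _ => hcol0 _
    have hcols : (∏ c, (∑ r, (Mβ r c)^2)) ≤ 4^m * M^(2*m) * ε^(2*m) := by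
      rw [hsplit2]
      by_cases ht0 : t = 0
      · have hleft : (∏ s : Fin t, ∑ r, (Mβ r (ee (Sum.inl s)))^2) = 1 := by
          haveI : IsEmpty (Fin t) := by rw [ht0]; exact Fin.isEmpty
          exact Finset.prod_of_isEmpty _
        have ht'2m : t' = 2*m := by omega
        have h2 : ((2*m:ℝ) * ε^2 / t')^t' = (ε^2)^(2*m) := by
          rw [ht'2m]
          have : ((2*m : ℕ) : ℝ) = 2*m := by push_cast; ring
          rw [this, mul_div_cancel_left₀ _ (by positivity : (2*(m:ℝ)) ≠ 0)]
        have h3 : (ε^2)^(2*m) ≤ 4^m * M^(2*m) * ε^(2*m) := by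
          have e1 : (ε^2)^(2*m) = ε^(2*m) * ε^(2*m) := by
            rw [← pow_add, ← pow_mul]; ring_nf
          rw [e1]
          have e2 : ε^(2*m) ≤ M^(2*m) := pow_le_pow_left₀ hε hεM _
          calc ε^(2*m) * ε^(2*m) ≤ M^(2*m) * ε^(2*m) :=
                mul_le_mul_of_nonneg_right e2 (pow_nonneg hε _)
            _ = 1 * (M^(2*m) * ε^(2*m)) := by ring
            _ ≤ 4^m * (M^(2*m) * ε^(2*m)) := by
                have h14 : (1:ℝ) ≤ 4^m := one_le_pow₀ (by norm_num)
                exact mul_le_mul_of_nonneg_right h14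
                  (mul_nonneg (pow_nonneg hM0 _) (pow_nonneg hε _))
            _ = 4^m * M^(2*m) * ε^(2*m) := by ring
        rw [hleft, one_mul]
        exact le_trans (hright.trans h2.le) h3
      · have htpos : 1 ≤ t := by omega
        have htR : (0:ℝ) < t := by exact_mod_cast htpos
        have hleft : (∏ s : Fin t, ∑ r, (Mβ r (ee (Sum.inl s)))^2)
            ≤ ((2*m:ℝ) * M^2 / t)^t := by
          refine le_trans (prod_le_avg_pow htpos _ (fun s => hcol0 _)) ?_
          apply pow_le_pow_left₀ (by positivity) ((div_le_div_iff_of_pos_right htR).mpr hS1)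
        have hleftnn : (0:ℝ) ≤ ∏ s : Fin t, ∑ r, (Mβ r (ee (Sum.inl s)))^2 :=
          Finset.prod_nonneg fun s _ => hcol0 _
        calc (∏ s : Fin t, ∑ r, (Mβ r (ee (Sum.inl s)))^2)
              * ∏ s : Fin t', ∑ r, (Mβ r (ee (Sum.inr s)))^2
            ≤ ((2*m:ℝ) * M^2 / t)^t * ((2*m:ℝ) * ε^2 / t')^t' :=
              mul_le_mul hleft hright hrightnn
                (pow_nonneg (by positivity) t)
          _ ≤ 4^m * M^(2*m) * ε^(2*m) := sc_ineq hm htpos hrkU hrk2 hε hεM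
    have hLHSnn : (0:ℝ) ≤ ∏ i, Metric.infDist (g i)
        ((span ℝ (g '' Set.Iio i) : Submodule ℝ F) : Set F) :=
      Finset.prod_nonneg fun i _ => Metric.infDist_nonneg
    have hsq : ((2:ℝ)^m * M^m * ε^m)^2 = 4^m * M^(2*m) * ε^(2*m) := by
      rw [mul_pow, mul_pow, ← pow_mul, ← pow_mul, ← pow_mul]
      have h4 : (2:ℝ)^(m*2) = 4^m := by
        rw [mul_comm, pow_mul]; norm_num
      rw [h4, mul_comm m 2]
    have hRHSnn : (0:ℝ) ≤ 2^m * M^m * ε^m :=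
      mul_nonneg (mul_nonneg (pow_nonneg (by norm_num) m) (pow_nonneg hM0 m)) (pow_nonneg hε m)
    apply sq_le_imp hLHSnn hRHSnn
    calc (∏ i, Metric.infDist (g i) ((span ℝ (g '' Set.Iio i) : Submodule ℝ F) : Set F))^2
        ≤ (∏ i, (⟪e i, g i⟫))^2 := pow_le_pow_left₀ hLHSnn hlow 2
      _ = Me.det^2 := by rw [hdet_e]
      _ = Mβ.det^2 := hcongr
      _ ≤ ∏ c, (∑ r, (Mβ r c)^2) := hHad
      _ ≤ 4^m * M^(2*m) * ε^(2*m) := hcols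
      _ = ((2:ℝ)^m * M^m * ε^m)^2 := hsq.symm

end Aux

section Outer

variable {H : Type*} [NormedAddCommGroup H] [InnerProductSpace ℝ H]

private lemma greedy_prod_bound
    (f : ℕ → H) (V : ℕ → Submodule ℝ H)
    (hV : ∀ n, V n = span ℝ (f '' Set.Iio n))
    (σ : ℕ → ℝ)
    (hanti : ∀ a b : ℕ, a ≤ b → σ b ≤ σ a)
    (hdist : ∀ n, Metric.infDist (f n) ((V n : Set H)) = σ n)
    (hle : ∀ N i : ℕ, N ≤ i → Metric.infDist (f i) ((V N : Set H)) ≤ σ N)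
    (W : Submodule ℝ H) [FiniteDimensional ℝ W] (m : ℕ) (hm : 1 ≤ m)
    (hW : finrank ℝ W ≤ m) (ε : ℝ) (hε : 0 ≤ ε)
    (hWd : ∀ i, Metric.infDist (f i) (W : Set H) ≤ ε) (N : ℕ) :
    (∏ i ∈ Finset.range (2*m), σ (N+i)) ≤ 2^m * σ N ^ m * ε^m := by
  classical
  have hσ0 : ∀ n, 0 ≤ σ n := fun n => (hdist n) ▸ Metric.infDist_nonneg
  by_cases htriv : σ N < ε
  · calc (∏ i ∈ Finset.range (2*m), σ (N+i))
        ≤ ∏ _i ∈ Finset.range (2*m), σ N :=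
          Finset.prod_le_prod (fun i _ => hσ0 _) (fun i _ => hanti N (N+i) (by omega))
      _ = σ N ^ (2*m) := by rw [Finset.prod_const, Finset.card_range]
      _ = σ N ^ m * σ N ^ m := by rw [← pow_add]; congr 1; omega
      _ ≤ σ N ^ m * ε ^ m :=
          mul_le_mul_of_nonneg_left (pow_le_pow_left₀ (hσ0 N) htriv.le m)
            (pow_nonneg (hσ0 N) m)
      _ ≤ 2^m * σ N ^ m * ε^m := by
          have h1 : (1:ℝ) ≤ 2^m := one_le_pow₀ (by norm_num)
          have h2 : (0:ℝ) ≤ σ N ^ m * ε ^ m :=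
            mul_nonneg (pow_nonneg (hσ0 N) m) (pow_nonneg hε m)
          calc σ N ^ m * ε ^ m = 1 * (σ N ^ m * ε ^ m) := (one_mul _).symm
            _ ≤ 2^m * (σ N ^ m * ε ^ m) := mul_le_mul_of_nonneg_right h1 h2
            _ = 2^m * σ N ^ m * ε^m := by ring
  · push_neg at htriv
    haveI hVfin : ∀ n, FiniteDimensional ℝ (V n) := fun n => by
      rw [hV n]; exact FiniteDimensional.span_of_finite ℝ ((Set.finite_Iio n).image f)
    haveI := hVfin N
    set g : Fin (2*m) → H := fun i => f (N+(i:ℕ)) - (orthogonalProjection (V N) (f (N+(i:ℕ))) : H)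
      with hgdef
    set E : Submodule ℝ H := span ℝ (Set.range g) with hEdef
    haveI : FiniteDimensional ℝ E := FiniteDimensional.span_of_finite ℝ (Set.finite_range g)
    have hgE : ∀ i, g i ∈ E := fun i => subset_span (Set.mem_range_self i)
    have hEVN : E ≤ (V N)ᗮ := by
      rw [hEdef, span_le]
      rintro y ⟨i, rfl⟩
      exact sub_starProjection_mem_orthogonal _
    have hVNE : (V N) ≤ Eᗮ := by
      intro v hv
      rw [Submodule.mem_orthogonal]
      intro u hu
      have h1 := (Submodule.mem_orthogonal (V N) u).mp (hEVN hu) v hv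
      rwa [real_inner_comm] at h1
    have hgid : ∀ i : Fin (2*m), (orthogonalProjection E (f (N+(i:ℕ))) : H) = g i := by
      intro i
      apply eq_starProjection_of_mem_orthogonal (hgE i)
      have h1 : f (N+(i:ℕ)) - g i = (orthogonalProjection (V N) (f (N+(i:ℕ))) : H) := by
        simp only [hgdef]
        abel
      rw [h1]
      exact hVNE (coe_mem _)
    set T : H →ₗ[ℝ] H := (E.subtype).comp (orthogonalProjection E).toLinearMap with hTdef
    have hTval : ∀ y : H, T y = (orthogonalProjection E y : H) := fun y => rfl
    set U : Submodule ℝ H := W.map T with hUdef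
    have hUE : U ≤ E := by
      rintro y ⟨w, hw, rfl⟩
      rw [hTval]
      exact coe_mem _
    have hUrk : finrank ℝ U ≤ m := le_trans (Submodule.finrank_map_le T W) hW
    have happrox : ∀ i, Metric.infDist (g i) (U : Set H) ≤ ε := by
      intro i
      set w : H := (orthogonalProjection W (f (N+(i:ℕ))) : H) with hwdef
      have hwW : w ∈ W := coe_mem _
      have hfw : ‖f (N+(i:ℕ)) - w‖ ≤ ε := by
        rw [hwdef, ← infDist_orthProj W (f (N+(i:ℕ)))]
        exact hWd (N+(i:ℕ))
      have hTwU : T w ∈ U := Submodule.mem_map_of_mem hwW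
      refine le_trans (Metric.infDist_le_dist_of_mem hTwU) ?_
      rw [dist_eq_norm]
      have h2 : g i - T w = (orthogonalProjection E (f (N+(i:ℕ)) - w) : H) := by
        calc g i - T w
            = (orthogonalProjection E (f (N+(i:ℕ))) : H) - (orthogonalProjection E w : H) := by
              rw [hgid i, hTval]
          _ = ((orthogonalProjection E (f (N+(i:ℕ))) - orthogonalProjection E w : E) : H) := by
              push_cast
              ring
          _ = (orthogonalProjection E (f (N+(i:ℕ)) - w) : H) := by rw [← map_sub]
      rw [h2]
      exact le_trans (norm_orthProj_le E _) hfw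
    have hgM : ∀ i, ‖g i‖ ≤ σ N := by
      intro i
      have h1 : ‖g i‖ = Metric.infDist (f (N+(i:ℕ))) ((V N : Set H)) := by
        rw [infDist_orthProj (V N) (f (N+(i:ℕ)))]
      rw [h1]
      exact hle N (N+(i:ℕ)) (by omega)
    have hVmono : ∀ a b : ℕ, a ≤ b → V a ≤ V b := by
      intro a b hab
      rw [hV a, hV b]
      exact span_mono (Set.image_mono (fun z hz => lt_of_lt_of_le hz hab))
    have hfact : ∀ i : Fin (2*m), σ (N+(i:ℕ))
        ≤ Metric.infDist (g i) ((span ℝ (g '' Set.Iio i) : Submodule ℝ H) : Set H) := by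
      intro i
      apply le_infDist' ⟨0, Submodule.zero_mem _⟩
      intro y hy
      have hsub : span ℝ (g '' Set.Iio i) ≤ V (N+(i:ℕ)) := by
        rw [span_le]
        rintro z ⟨j, hj, rfl⟩
        have hji : (j:ℕ) < (i:ℕ) := hj
        apply sub_mem
        · have h5 : f (N+(j:ℕ)) ∈ V (N+(j:ℕ)+1) := by
            rw [hV]
            exact subset_span ⟨N+(j:ℕ), Set.mem_Iio.mpr (by omega), rfl⟩
          exact hVmono _ _ (by omega) h5
        · exact hVmono N _ (by omega) (coe_mem _)
      have hymem : (orthogonalProjection (V N) (f (N+(i:ℕ))) : H) + y ∈ V (N+(i:ℕ)) :=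
        add_mem (hVmono N _ (by omega) (coe_mem _)) (hsub hy)
      have h7 : dist (g i) y = dist (f (N+(i:ℕ)))
          ((orthogonalProjection (V N) (f (N+(i:ℕ))) : H) + y) := by
        rw [dist_eq_norm, dist_eq_norm]
        congr 1
        exact sub_sub _ _ _
      rw [h7]
      calc σ (N+(i:ℕ)) = Metric.infDist (f (N+(i:ℕ))) ((V (N+(i:ℕ))) : Set H) :=
            (hdist _).symm
        _ ≤ _ := Metric.infDist_le_dist_of_mem hymem
    have hcore := core_bound hm g U (hEdef ▸ hUE) hUrk hε htriv hgM happrox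
    calc (∏ i ∈ Finset.range (2*m), σ (N+i))
        = ∏ i : Fin (2*m), σ (N+(i:ℕ)) := (Fin.prod_univ_eq_prod_range _ _).symm
      _ ≤ ∏ i : Fin (2*m), Metric.infDist (g i)
            ((span ℝ (g '' Set.Iio i) : Submodule ℝ H) : Set H) :=
          Finset.prod_le_prod (fun i _ => hσ0 _) (fun i _ => hfact i)
      _ ≤ 2^m * σ N ^ m * ε^m := hcore

end Outer

/-- Convergence rate of the P-greedy algorithm for kernels of finite smoothness
(Theorem `th:final_bound` (a) in abstract form): if `Ω` is compact, `Φ : Ω → H`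
continuous, `(x_n)` a P-greedy sequence (each new point maximizes the current
Power Function `x ↦ dist(Φ x, V_n)`, where `V n = span{Φ x_1, …, Φ x_n}` and
`x n` plays the role of `x_{n+1}`), and for every `n ≥ 1` some `n`-point set
`Y_n ⊆ Ω` achieves `sup_{x ∈ Ω} dist(Φ x, span{Φ y : y ∈ Y_n}) ≤ c n^{−α}`,
then `sup_{x ∈ Ω} dist(Φ x, V_n) ≤ 2^{5α+1} c n^{−α}` for all `n ≥ 1`. -/
theorem pgreedy_polynomial_rate
    {H : Type*} [NormedAddCommGroup H] [InnerProductSpace ℝ H] [CompleteSpace H]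
    {Ω : Type*} [TopologicalSpace Ω] [CompactSpace Ω]
    (Φ : Ω → H) (hΦ : Continuous Φ)
    (x : ℕ → Ω) (V : ℕ → Submodule ℝ H)
    (hV : ∀ n, V n = Submodule.span ℝ ((Φ ∘ x) '' Set.Iio n))
    (hgreedy : ∀ n, Metric.infDist (Φ (x n)) ((V n : Set H))
      = ⨆ y : Ω, Metric.infDist (Φ y) ((V n : Set H)))
    (c α : ℝ) (hc : 0 < c) (hα : 0 < α)
    (hY : ∀ n : ℕ, 1 ≤ n → ∃ Y : Finset Ω, Y.card = n ∧
      ∀ z : Ω, Metric.infDist (Φ z)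
        ((Submodule.span ℝ (Φ '' (Y : Set Ω))) : Set H) ≤ c * (n : ℝ) ^ (-α)) :
    ∀ n : ℕ, 1 ≤ n →
      (⨆ z : Ω, Metric.infDist (Φ z) ((V n : Set H)))
        ≤ 2 ^ (5 * α + 1) * c * (n : ℝ) ^ (-α) := by
  classical
  set f : ℕ → H := Φ ∘ x with hfdef
  set σ : ℕ → ℝ := fun k => ⨆ z : Ω, Metric.infDist (Φ z) ((V k : Set H)) with hσdef
  haveI : Nonempty Ω := ⟨x 0⟩
  obtain ⟨z₀, -, hz₀⟩ := isCompact_univ.exists_isMaxOn Set.univ_nonempty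
    ((hΦ.norm).continuousOn)
  have hz₀' : ∀ z : Ω, ‖Φ z‖ ≤ ‖Φ z₀‖ := fun z => hz₀ (Set.mem_univ z)
  have hbdd : ∀ k, BddAbove (Set.range fun z : Ω => Metric.infDist (Φ z) ((V k : Set H))) := by
    intro k
    refine ⟨‖Φ z₀‖, ?_⟩
    rintro r ⟨z, rfl⟩
    calc Metric.infDist (Φ z) ((V k : Set H)) ≤ dist (Φ z) 0 :=
          Metric.infDist_le_dist_of_mem (zero_mem _)
      _ = ‖Φ z‖ := by rw [dist_zero_right]
      _ ≤ ‖Φ z₀‖ := hz₀' z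
  have hσ0 : ∀ k, 0 ≤ σ k := fun k => Real.iSup_nonneg (fun z => Metric.infDist_nonneg)
  have hle : ∀ (z : Ω) (k : ℕ), Metric.infDist (Φ z) ((V k : Set H)) ≤ σ k :=
    fun z k => le_ciSup (hbdd k) z
  have hanti : ∀ a b : ℕ, a ≤ b → σ b ≤ σ a := by
    intro a b hab
    apply ciSup_mono (hbdd a)
    intro z
    have hVab : V a ≤ V b := by
      rw [hV a, hV b]
      exact span_mono (Set.image_mono fun t ht => lt_of_lt_of_le ht hab)
    exact Metric.infDist_le_infDist_of_subset hVab ⟨0, zero_mem _⟩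
  have hdist : ∀ k, Metric.infDist (f k) ((V k : Set H)) = σ k := fun k => hgreedy k
  have hle' : ∀ N i : ℕ, N ≤ i → Metric.infDist (f i) ((V N : Set H)) ≤ σ N :=
    fun N i _ => hle (x i) N
  have comb : ∀ u v : ℝ, (2:ℝ)^u * (2:ℝ)^v = (2:ℝ)^(u+v) :=
    fun u v => (Real.rpow_add two_pos u v).symm
  -- the recursion σ(4m)² ≤ 2 σ(2m) c m^{-α}
  have hrec : ∀ m : ℕ, 1 ≤ m → σ (4*m)^2 ≤ 2 * σ (2*m) * (c * (m:ℝ)^(-α)) := by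
    intro m hm
    obtain ⟨Y, hYcard, hYd⟩ := hY m hm
    set W := span ℝ (Φ '' (Y : Set Ω)) with hWdef
    haveI : FiniteDimensional ℝ W :=
      FiniteDimensional.span_of_finite ℝ ((Y : Set Ω).toFinite.image Φ)
    have hWrk : finrank ℝ W ≤ m := by
      have h1 : (Φ '' (Y : Set Ω)) = ((Y.image Φ : Finset H) : Set H) := by
        rw [Finset.coe_image]
      rw [hWdef, h1]
      exact le_trans (finrank_span_finset_le_card _)
        (le_trans Finset.card_image_le (le_of_eq hYcard))
    have hε0 : (0:ℝ) ≤ c * (m:ℝ)^(-α) := by positivity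
    have hprod := greedy_prod_bound f V hV σ hanti hdist hle' W m hm hWrk _ hε0
      (fun i => hYd (x i)) (2*m)
    have hpow : σ (4*m)^(2*m) ≤ ∏ i ∈ Finset.range (2*m), σ (2*m+i) := by
      calc σ (4*m)^(2*m) = ∏ _i ∈ Finset.range (2*m), σ (4*m) := by
            rw [Finset.prod_const, Finset.card_range]
        _ ≤ ∏ i ∈ Finset.range (2*m), σ (2*m+i) :=
            Finset.prod_le_prod (fun _ _ => hσ0 _)
              (fun i hi => hanti _ _ (by
                have := Finset.mem_range.mp hi
                omega))
    have hchain : (σ (4*m)^2)^m ≤ (2 * σ (2*m) * (c * (m:ℝ)^(-α)))^m := by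
      have hh1 : (σ (4*m)^2)^m = σ (4*m)^(2*m) := by rw [← pow_mul, mul_comm]
      have hh2 : (2 * σ (2*m) * (c * (m:ℝ)^(-α)))^m
          = 2^m * σ (2*m)^m * (c * (m:ℝ)^(-α))^m := by rw [mul_pow, mul_pow]
      rw [hh1, hh2]
      exact le_trans hpow hprod
    exact le_of_pow_le_pow_left₀ (by omega)
      (mul_nonneg (mul_nonneg (by norm_num) (hσ0 _)) (by positivity)) hchain
  -- base : σ 1 ≤ 2c
  have hbase : σ 1 ≤ 2 * c := by
    obtain ⟨Y, hYcard, hYd⟩ := hY 1 le_rfl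
    set W := span ℝ (Φ '' (Y : Set Ω)) with hWdef
    haveI : FiniteDimensional ℝ W :=
      FiniteDimensional.span_of_finite ℝ ((Y : Set Ω).toFinite.image Φ)
    have hWrk : finrank ℝ W ≤ 1 := by
      have h1 : (Φ '' (Y : Set Ω)) = ((Y.image Φ : Finset H) : Set H) := by
        rw [Finset.coe_image]
      rw [hWdef, h1]
      exact le_trans (finrank_span_finset_le_card _)
        (le_trans Finset.card_image_le (le_of_eq hYcard))
    have hε0 : (0:ℝ) ≤ c * ((1:ℕ):ℝ)^(-α) := by positivity
    have hprod := greedy_prod_bound f V hV σ hanti hdist hle' W 1 le_rfl hWrk _ hε0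
      (fun i => hYd (x i)) 0
    have he1 : c * ((1:ℕ):ℝ)^(-α) = c := by
      rw [Nat.cast_one, Real.one_rpow, mul_one]
    rw [he1] at hprod
    have h2 : σ 0 * σ 1 ≤ 2 * σ 0 * c := by
      have : (∏ i ∈ Finset.range (2*1), σ (0+i)) = σ 0 * σ 1 := by
        norm_num [Finset.prod_range_succ]
      rw [this] at hprod
      calc σ 0 * σ 1 ≤ 2^1 * σ 0 ^ 1 * c^1 := hprod
        _ = 2 * σ 0 * c := by ring
    rcases eq_or_lt_of_le (hσ0 1) with h0 | h0
    · rw [← h0]; positivity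
    · have hσ0pos : 0 < σ 0 := lt_of_lt_of_le h0 (hanti 0 1 (by omega))
      nlinarith
  -- induction along powers of two
  have key : ∀ k : ℕ, σ (2^k) ≤ (2:ℝ)^(3*α+1) * c * (2:ℝ)^(-((k:ℝ)*α))
      ∧ σ (2^(k+1)) ≤ (2:ℝ)^(3*α+1) * c * (2:ℝ)^(-(((k:ℝ)+1)*α)) := by
    have hA1 : (2:ℝ) ≤ (2:ℝ)^(3*α+1) := by
      nth_rewrite 1 [← Real.rpow_one 2]
      exact Real.rpow_le_rpow_of_exponent_le one_le_two (by linarith)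
    intro k
    induction k with
    | zero =>
      constructor
      · have h0 : (2:ℕ)^0 = 1 := by norm_num
        rw [h0]
        simp only [Nat.cast_zero, zero_mul, neg_zero, Real.rpow_zero, mul_one]
        exact le_trans hbase (mul_le_mul_of_nonneg_right hA1 hc.le)
      · have h0 : (2:ℕ)^(0+1) = 2 := by norm_num
        rw [h0]
        simp only [Nat.cast_zero, zero_add, one_mul]
        have h1 : σ 2 ≤ 2*c := le_trans (hanti 1 2 (by omega)) hbase
        have heq : (2:ℝ)^(3*α+1) * c * (2:ℝ)^(-α) = (2:ℝ)^(2*α+1) * c := by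
          rw [mul_right_comm, comb,
            show (3*α+1)+(-α) = 2*α+1 from by ring]
        rw [heq]
        have h2 : (2:ℝ) ≤ (2:ℝ)^(2*α+1) := by
          nth_rewrite 1 [← Real.rpow_one 2]
          exact Real.rpow_le_rpow_of_exponent_le one_le_two (by linarith)
        exact le_trans h1 (mul_le_mul_of_nonneg_right h2 hc.le)
    | succ k IH =>
      constructor
      · have hcst : ((k+1 : ℕ):ℝ) = (k:ℝ)+1 := by push_cast; ring
        rw [hcst]
        exact IH.2
      have hcast : ((2^k : ℕ) : ℝ) ^ (-α) = (2:ℝ)^(-((k:ℝ)*α)) := by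
        push_cast
        rw [← Real.rpow_natCast 2 k, ← Real.rpow_mul (by norm_num : (0:ℝ) ≤ 2)]
        congr 1
        ring
      have hrk := hrec (2^k) Nat.one_le_two_pow
      have e1 : 4 * 2^k = 2^(k+2) := by ring
      have e2 : 2 * 2^k = 2^(k+1) := by ring
      rw [e1, e2, hcast] at hrk
      have hIH := IH.2
      have hbound : σ (2^(k+2))^2 ≤ ((2:ℝ)^(3*α+1) * c * (2:ℝ)^(-(((k:ℝ)+2)*α)))^2 := by
        have step : σ (2^(k+2))^2
            ≤ 2 * ((2:ℝ)^(3*α+1) * c * (2:ℝ)^(-(((k:ℝ)+1)*α))) * (c * (2:ℝ)^(-((k:ℝ)*α))) := by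
          refine le_trans hrk ?_
          apply mul_le_mul_of_nonneg_right
            (mul_le_mul_of_nonneg_left hIH (by norm_num)) (by positivity)
        refine le_trans step (le_of_eq ?_)
        have key2 : ∀ X Y Z A : ℝ, (2:ℝ)^(1:ℝ) * (X * Y) = A * (Z * Z) →
            2 * (A * c * X) * (c * Y) = (A * c * Z)^2 := by
          intro X Y Z A h
          rw [Real.rpow_one] at h
          linear_combination (c^2 * A) * h
        apply key2
        rw [comb, comb, comb, comb]
        congr 1
        ring
      have hfin := sq_le_imp (hσ0 _) (by positivity) hbound
      have hcst2 : ((k:ℝ)) + 2 = ((k+1 : ℕ):ℝ) + 1 := by push_cast; ring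
      rw [hcst2] at hfin
      exact hfin
  -- conclusion
  intro n hn
  set k := Nat.log 2 n with hkdef
  have hk1 : 2^k ≤ n := Nat.pow_log_le_self 2 (by omega)
  have hk2 : n < 2^(k+1) := Nat.lt_pow_succ_log_self (by norm_num) n
  have hn0 : (0:ℝ) < (n:ℝ) := by exact_mod_cast Nat.lt_of_lt_of_le Nat.zero_lt_one hn
  have h1 : σ n ≤ σ (2^k) := hanti _ _ hk1
  have h2 := (key k).1
  have ha : (2:ℝ)^(-(((k:ℝ)+1)*α)) = (((2:ℝ)^((k+1 : ℕ)))) ^ (-α) := by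
    rw [← Real.rpow_natCast 2 (k+1), ← Real.rpow_mul (by norm_num : (0:ℝ) ≤ 2)]
    push_cast
    ring_nf
  have hb : ((2:ℝ)^((k+1:ℕ))) ^ (-α) ≤ (n:ℝ)^(-α) := by
    rw [Real.rpow_neg (by positivity), Real.rpow_neg (by positivity)]
    apply inv_anti₀ (Real.rpow_pos_of_pos hn0 α)
    apply Real.rpow_le_rpow hn0.le ?_ hα.le
    exact_mod_cast hk2.le
  have e3 : (2:ℝ)^(-((k:ℝ)*α)) = (2:ℝ)^α * (2:ℝ)^(-(((k:ℝ)+1)*α)) := by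
    rw [comb]
    congr 1
    ring
  calc σ n ≤ (2:ℝ)^(3*α+1) * c * (2:ℝ)^(-((k:ℝ)*α)) := le_trans h1 h2
    _ = (2:ℝ)^(4*α+1) * c * (2:ℝ)^(-(((k:ℝ)+1)*α)) := by
        rw [mul_right_comm, mul_right_comm ((2:ℝ)^(4*α+1)) c, comb, comb,
          show (3*α+1)+(-((k:ℝ)*α)) = (4*α+1)+(-(((k:ℝ)+1)*α)) from by ring]
    _ ≤ (2:ℝ)^(4*α+1) * c * (n:ℝ)^(-α) := by
        apply mul_le_mul_of_nonneg_left ?_ (by positivity)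
        rw [ha]
        exact hb
    _ ≤ 2^(5*α+1) * c * (n:ℝ)^(-α) := by
        apply mul_le_mul_of_nonneg_right ?_ (by positivity)
        apply mul_le_mul_of_nonneg_right ?_ hc.le
        exact Real.rpow_le_rpow_of_exponent_le one_le_two (by linarith)
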